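/- arXiv:2601.01342 — 2 statements merged into one kernel-verified Lean document; each statement's English description precedes it below -/
import Mathlib

section
/- Suppose at each step a row index j is chosen with probability ‖a_j‖₂²/‖A‖_F², and x' is the λ = 1 Kaczmarz update from x using row j. If A x_sol = b, then the expected squared error satisfies E[‖x' - x_sol‖₂²] ≤ (1 - σ_min(A)²/‖A‖_F²) ‖x - x_sol‖₂², where σ_min(A) is the smallest singular value of A. -/
/-- The Kaczmarz update with relaxation parameter λ = 1. -/
noncomputable def kaczmarzUpdate {m : ℕ} (a x : EuclideanSpace ℝ (Fin m)) (b : ℝ) :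
    EuclideanSpace ℝ (Fin m) :=
  x + ((b - (inner ℝ a x : ℝ)) / ‖a‖ ^ 2) • a

lemma kacz_err {m : ℕ} (a x xsol : EuclideanSpace ℝ (Fin m)) (ha : a ≠ 0) (b : ℝ)
    (hb : (inner ℝ a xsol : ℝ) = b) :
    ‖kaczmarzUpdate a x b - xsol‖ ^ 2
      = ‖x - xsol‖ ^ 2 - (inner ℝ a (x - xsol) : ℝ) ^ 2 / ‖a‖ ^ 2 := by
  have hna : ‖a‖ ≠ 0 := norm_ne_zero_iff.mpr ha
  set c : ℝ := inner ℝ a (x - xsol) with hc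
  have h1 : kaczmarzUpdate a x b - xsol
      = (x - xsol) - (c / ‖a‖ ^ 2) • a := by
    have hbc : b - (inner ℝ a x : ℝ) = -c := by
      rw [hc, inner_sub_right]; ring_nf; rw [← hb]; ring
    rw [kaczmarzUpdate, hbc]
    module
  rw [h1, norm_sub_sq_real, inner_smul_right, norm_smul, real_inner_comm, ← hc]
  rw [mul_pow, Real.norm_eq_abs, sq_abs]
  field_simp
  ring

/-- One step of randomized Kaczmarz: choosing row `j` with probability `‖a_j‖²/‖A‖_F²`
and performing the λ = 1 update, if `A x_sol = b` and `σ` is a lower bound on the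
singular values of `A` (i.e. `σ²‖v‖² ≤ ‖A v‖²` for all `v`), then the expected squared
error contracts: `E‖x' - x_sol‖² ≤ (1 - σ²/‖A‖_F²) ‖x - x_sol‖²`. -/
theorem randomized_kaczmarz_expected_contraction {n m : ℕ} (hn : 0 < n)
    (a : Fin n → EuclideanSpace ℝ (Fin m)) (ha : ∀ j, a j ≠ 0)
    (b : Fin n → ℝ) (xsol x : EuclideanSpace ℝ (Fin m))
    (hsol : ∀ j, (inner ℝ (a j) xsol : ℝ) = b j)
    (σ : ℝ)
    (hσ : ∀ v : EuclideanSpace ℝ (Fin m),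
      σ ^ 2 * ‖v‖ ^ 2 ≤ ∑ j, (inner ℝ (a j) v : ℝ) ^ 2) :
    ∑ j, (‖a j‖ ^ 2 / (∑ i, ‖a i‖ ^ 2)) * ‖kaczmarzUpdate (a j) x (b j) - xsol‖ ^ 2
      ≤ (1 - σ ^ 2 / (∑ i, ‖a i‖ ^ 2)) * ‖x - xsol‖ ^ 2 := by
  classical
  set e := x - xsol with he
  set S := ∑ i, ‖a i‖ ^ 2 with hSdef
  have hS : 0 < S := by
    refine Finset.sum_pos' (fun i _ => by positivity) ⟨⟨0, hn⟩, Finset.mem_univ _, ?_⟩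
    exact pow_pos (norm_pos_iff.mpr (ha ⟨0, hn⟩)) 2
  have hrw : ∀ j : Fin n, (‖a j‖ ^ 2 / S) * ‖kaczmarzUpdate (a j) x (b j) - xsol‖ ^ 2
      = ‖a j‖ ^ 2 / S * ‖e‖ ^ 2 - (inner ℝ (a j) e : ℝ) ^ 2 / S := by
    intro j
    rw [kacz_err (a j) x xsol (ha j) (b j) (hsol j), ← he]
    have h : ‖a j‖ ≠ 0 := norm_ne_zero_iff.mpr (ha j)
    field_simp
  have h1 : (∑ j : Fin n, ‖a j‖ ^ 2 / S * ‖e‖ ^ 2) = ‖e‖ ^ 2 := by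
    rw [← Finset.sum_mul, ← Finset.sum_div, ← hSdef, div_self hS.ne', one_mul]
  rw [Finset.sum_congr rfl (fun j _ => hrw j), Finset.sum_sub_distrib, h1, ← Finset.sum_div]
  have key : σ ^ 2 * ‖e‖ ^ 2 ≤ ∑ j, (inner ℝ (a j) e : ℝ) ^ 2 := hσ e
  have h2 : σ ^ 2 * ‖e‖ ^ 2 / S ≤ (∑ j, (inner ℝ (a j) e : ℝ) ^ 2) / S :=
    (div_le_div_iff_of_pos_right hS).mpr key
  have h3 : (1 - σ ^ 2 / S) * ‖e‖ ^ 2 = ‖e‖ ^ 2 - σ ^ 2 * ‖e‖ ^ 2 / S := by ring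
  rw [h3]
  linarith
end

section
/- If U is a block encoding of matrices A₁ (with a ancillas) and V is a block encoding of A₂ (with the same ancilla structure), then the product construction yields a block encoding of A₁ A₂: specifically, (⟨0|^{⊗a} ⊗ I) U' V' (|0⟩^{⊗a’} ⊗ I) = A₁ A₂ where U', V' act on appropriately enlarged ancilla spaces with fresh ancillas for each encoding. -/
open Matrix Kronecker

/-- The zero basis state of an `a`-qubit ancilla register. -/
def ancZero (a : ℕ) : Fin (2 ^ a) := ⟨0, Nat.two_pow_pos a⟩

/-- The swap of the two ancilla registers (keeping the main register fixed). -/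
def ancSwap (α β γ : Type*) : α × (β × γ) ≃ β × (α × γ) :=
  ((Equiv.prodAssoc α β γ).symm.trans
    ((Equiv.prodComm α β).prodCongr (Equiv.refl γ))).trans (Equiv.prodAssoc β α γ)

/-- Product of block encodings: if `U` block-encodes `A₁` (with `a` ancilla qubits) and
`V` block-encodes `A₂` (with `b` fresh ancilla qubits), then
`W = (I ⊗ U) · (swap of ancilla registers applied to I ⊗ V)` is a block encoding of the
product `A₁ A₂`. -/
theorem product_block_encoding {a b N : ℕ}
    (U : Matrix (Fin (2 ^ a) × Fin N) (Fin (2 ^ a) × Fin N) ℂ)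
    (V : Matrix (Fin (2 ^ b) × Fin N) (Fin (2 ^ b) × Fin N) ℂ)
    (hU : U ∈ Matrix.unitaryGroup (Fin (2 ^ a) × Fin N) ℂ)
    (hV : V ∈ Matrix.unitaryGroup (Fin (2 ^ b) × Fin N) ℂ)
    (A₁ A₂ : Matrix (Fin N) (Fin N) ℂ)
    (hUA : ∀ i j, U (ancZero a, i) (ancZero a, j) = A₁ i j)
    (hVA : ∀ i j, V (ancZero b, i) (ancZero b, j) = A₂ i j) :
    ∀ i j,
      (((1 : Matrix (Fin (2 ^ b)) (Fin (2 ^ b)) ℂ) ⊗ₖ U) *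
        (Matrix.reindex (ancSwap (Fin (2 ^ a)) (Fin (2 ^ b)) (Fin N))
          (ancSwap (Fin (2 ^ a)) (Fin (2 ^ b)) (Fin N))
          ((1 : Matrix (Fin (2 ^ a)) (Fin (2 ^ a)) ℂ) ⊗ₖ V)))
        (ancZero b, (ancZero a, i)) (ancZero b, (ancZero a, j)) = (A₁ * A₂) i j := by
  intro i j
  simp only [Matrix.mul_apply, Matrix.reindex_apply, Matrix.submatrix_apply,
    Matrix.kroneckerMap_apply, ancSwap, Equiv.symm_trans_apply, Equiv.prodAssoc,
    Equiv.prodComm, Equiv.prodCongr, Equiv.coe_fn_mk, Equiv.coe_fn_symm_mk,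
    Equiv.refl_apply, Prod.map, Matrix.one_apply]
  rw [Fintype.sum_prod_type]
  rw [Finset.sum_eq_single (ancZero b)]
  · simp only [if_pos rfl, one_mul]
    rw [Fintype.sum_prod_type]
    rw [Finset.sum_eq_single (ancZero a)]
    · simp [hUA, hVA, Matrix.mul_apply]
    · intro d _ hd
      simp [hd]
    · simp
  · intro c _ hc
    simp [Ne.symm hc]
  · simp
end
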